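/- (Prefix family inside the ball has geometric cardinality.) Let Γ be a finite type, S a list over Γ, and k : ℕ. Then the set {P ++ S | P : List Γ, |P| ≤ k} is contained in 𝒮_k(S,Γ) = {S' : List Γ | d_lev(S, S') ≤ k}, and its cardinality equals ∑_{i=0}^{k} |Γ|^i. -/

import Mathlib

/-- Mathlib's former `Levenshtein.Cost` (removed from Mathlib), restored verbatim. -/
structure Levenshtein.Cost (α β δ : Type*) where
  delete : α → δ
  insert : β → δ
  substitute : α → β → δ

/-- Mathlib's former `Levenshtein.defaultCost`, restored verbatim. -/
def Levenshtein.defaultCost {α : Type*} [DecidableEq α] : Levenshtein.Cost α α ℕ where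
  delete _ := 1
  insert _ := 1
  substitute a b := if a = b then 0 else 1

/-- Mathlib's former `Levenshtein.impl`, restored. -/
def Levenshtein.impl {α β δ : Type*} [AddZeroClass δ] [Min δ] (C : Levenshtein.Cost α β δ)
    (xs : List α) (y : β) (d : {r : List δ // 0 < r.length}) : {r : List δ // 0 < r.length} :=
  let ⟨ds, w⟩ := d
  xs.zip (ds.zip ds.tail) |>.foldr
    (init := ⟨[C.insert y + ds.getLast (List.length_pos_iff.mp w)], by simp⟩)
    (fun ⟨x, d₀, d₁⟩ ⟨r, w⟩ =>
      ⟨min (C.delete x + r[0]) (min (C.insert y + d₀) (C.substitute x y + d₁)) :: r, by simp⟩)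

/-- Mathlib's former `suffixLevenshtein`, restored. -/
def suffixLevenshtein {α β δ : Type*} [AddZeroClass δ] [Min δ] (C : Levenshtein.Cost α β δ)
    (xs : List α) (ys : List β) : {r : List δ // 0 < r.length} :=
  ys.foldr
    (Levenshtein.impl C xs)
    (xs.foldr (init := ⟨[0], by simp⟩) (fun a ⟨r, w⟩ => ⟨(C.delete a + r[0]) :: r, by simp⟩))

/-- Mathlib's former `levenshtein`, restored. -/
def levenshtein {α β δ : Type*} [AddZeroClass δ] [Min δ] (C : Levenshtein.Cost α β δ)
    (xs : List α) (ys : List β) : δ :=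
  let ⟨r, w⟩ := suffixLevenshtein C xs ys
  r[0]

/-- The Levenshtein (edit) distance with unit costs. -/
def dlev {Γ : Type*} [DecidableEq Γ] (S S' : List Γ) : ℕ :=
  levenshtein Levenshtein.defaultCost S S'

lemma levenshtein_eq_aux {α β δ : Type*} [AddZeroClass δ] [Min δ] (C : Levenshtein.Cost α β δ)
    (xs : List α) (ys : List β) :
    levenshtein C xs ys = (suffixLevenshtein C xs ys).1[0]'(suffixLevenshtein C xs ys).2 := rfl

lemma suffixLevenshtein_nil_aux {α β δ : Type*} [AddZeroClass δ] [Min δ]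
    (C : Levenshtein.Cost α β δ) (ys : List β) :
    (suffixLevenshtein C ([] : List α) ys).1 = [levenshtein C [] ys] := by
  cases ys with
  | nil => rfl
  | cons y ys => rfl

@[simp] lemma levenshtein_nil_nil {α β δ : Type*} [AddZeroClass δ] [Min δ]
    (C : Levenshtein.Cost α β δ) : levenshtein C ([] : List α) ([] : List β) = 0 := rfl

@[simp] lemma levenshtein_nil_cons {α β δ : Type*} [AddZeroClass δ] [Min δ]
    (C : Levenshtein.Cost α β δ) (y : β) (ys : List β) :
    levenshtein C ([] : List α) (y :: ys) = C.insert y + levenshtein C [] ys := by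
  have h := suffixLevenshtein_nil_aux C ys
  show C.insert y + (suffixLevenshtein C ([] : List α) ys).1.getLast _ = _
  simp [h]

lemma impl_cons_aux {α β δ : Type*} [AddZeroClass δ] [Min δ] (C : Levenshtein.Cost α β δ)
    (x : α) (xs : List α) (y : β) (d e : δ) (es : List δ) (w : 0 < (d :: e :: es).length) :
    (Levenshtein.impl C (x :: xs) y ⟨d :: e :: es, w⟩).1 =
      min (C.delete x + (Levenshtein.impl C xs y ⟨e :: es, by simp⟩).1[0]'(Levenshtein.impl C xs y ⟨e :: es, by simp⟩).2)
        (min (C.insert y + d) (C.substitute x y + e)) :: (Levenshtein.impl C xs y ⟨e :: es, by simp⟩).1 :=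
  rfl

lemma suffixLevenshtein_cons_tail_aux {α β δ : Type*} [AddZeroClass δ] [Min δ]
    (C : Levenshtein.Cost α β δ) (x : α) (xs : List α) (ys : List β) :
    (suffixLevenshtein C (x :: xs) ys).1.tail = (suffixLevenshtein C xs ys).1 := by
  induction ys with
  | nil => rfl
  | cons y ys ih =>
    show (Levenshtein.impl C (x :: xs) y (suffixLevenshtein C (x :: xs) ys)).1.tail =
      (Levenshtein.impl C xs y (suffixLevenshtein C xs ys)).1
    generalize suffixLevenshtein C (x :: xs) ys = A at ih ⊢
    generalize suffixLevenshtein C xs ys = B at ih ⊢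
    obtain ⟨_ | ⟨d, ds⟩, wA⟩ := A
    · simp at wA
    obtain ⟨_ | ⟨e, es⟩, wB⟩ := B
    · simp at wB
    simp only [List.tail_cons] at ih
    subst ih
    rw [impl_cons_aux]
    rfl

lemma levenshtein_cons_cons {α β δ : Type*} [AddZeroClass δ] [Min δ]
    (C : Levenshtein.Cost α β δ) (x : α) (xs : List α) (y : β) (ys : List β) :
    levenshtein C (x :: xs) (y :: ys) =
      min (C.delete x + levenshtein C xs (y :: ys))
        (min (C.insert y + levenshtein C (x :: xs) ys)
          (C.substitute x y + levenshtein C xs ys)) := by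
  have ih := suffixLevenshtein_cons_tail_aux C x xs ys
  show (Levenshtein.impl C (x :: xs) y (suffixLevenshtein C (x :: xs) ys)).1[0]'
      (Levenshtein.impl C (x :: xs) y (suffixLevenshtein C (x :: xs) ys)).2 =
    min (C.delete x + (Levenshtein.impl C xs y (suffixLevenshtein C xs ys)).1[0]'
        (Levenshtein.impl C xs y (suffixLevenshtein C xs ys)).2)
      (min (C.insert y + (suffixLevenshtein C (x :: xs) ys).1[0]'(suffixLevenshtein C (x :: xs) ys).2)
        (C.substitute x y + (suffixLevenshtein C xs ys).1[0]'(suffixLevenshtein C xs ys).2))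
  generalize suffixLevenshtein C (x :: xs) ys = A at ih ⊢
  generalize suffixLevenshtein C xs ys = B at ih ⊢
  obtain ⟨_ | ⟨d, ds⟩, wA⟩ := A
  · simp at wA
  obtain ⟨_ | ⟨e, es⟩, wB⟩ := B
  · simp at wB
  simp only [List.tail_cons] at ih
  subst ih
  rfl

lemma dlev_self {Γ : Type*} [DecidableEq Γ] (S : List Γ) : dlev S S = 0 := by
  induction S with
  | nil => simp [dlev]
  | cons x xs ih =>
    have h : dlev (x :: xs) (x :: xs) ≤ 0 := by
      rw [dlev, levenshtein_cons_cons]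
      have : (Levenshtein.defaultCost.substitute x x
          + levenshtein Levenshtein.defaultCost xs xs : ℕ) = 0 := by
        simpa [Levenshtein.defaultCost, dlev] using ih
      omega
    omega

lemma dlev_insert_le {Γ : Type*} [DecidableEq Γ] (S T : List Γ) (p : Γ) :
    dlev S (p :: T) ≤ 1 + dlev S T := by
  cases S with
  | nil => simp [dlev, Levenshtein.defaultCost]
  | cons x xs =>
    rw [dlev, levenshtein_cons_cons]
    have : (Levenshtein.defaultCost.insert p
        + levenshtein Levenshtein.defaultCost (x :: xs) T : ℕ)
        = 1 + dlev (x :: xs) T := by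
      simp [Levenshtein.defaultCost, dlev]
    omega

lemma dlev_append_le {Γ : Type*} [DecidableEq Γ] (S P : List Γ) :
    dlev S (P ++ S) ≤ P.length := by
  induction P with
  | nil => simp [dlev_self]
  | cons p P ih =>
    calc dlev S (p :: (P ++ S)) ≤ 1 + dlev S (P ++ S) := dlev_insert_le _ _ _
    _ ≤ 1 + P.length := by omega
    _ = (p :: P).length := by simp [Nat.add_comm]

open Mathlib in
/-- Finset of lists of length exactly `i`. -/
noncomputable def listsOfLen (Γ : Type*) [DecidableEq Γ] [Fintype Γ] (i : ℕ) :
    Finset (List Γ) :=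
  (Finset.univ : Finset (List.Vector Γ i)).image List.Vector.toList

open Mathlib in
lemma mem_listsOfLen {Γ : Type*} [DecidableEq Γ] [Fintype Γ] {i : ℕ} {l : List Γ} :
    l ∈ listsOfLen Γ i ↔ l.length = i := by
  simp only [listsOfLen, Finset.mem_image, Finset.mem_univ, true_and]
  constructor
  · rintro ⟨v, rfl⟩; exact v.2
  · rintro rfl; exact ⟨⟨l, rfl⟩, rfl⟩

open Mathlib in
lemma card_listsOfLen {Γ : Type*} [DecidableEq Γ] [Fintype Γ] (i : ℕ) :
    (listsOfLen Γ i).card = Fintype.card Γ ^ i := by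
  rw [listsOfLen, Finset.card_image_of_injective _ (fun a b h => List.Vector.eq a b h)]
  simp [card_vector]

/-- The family of prefix-extensions `P ++ S` with `|P| ≤ k` is contained in the
Levenshtein ball of radius `k` around `S`, and its cardinality equals
`∑_{i=0}^{k} |Γ|^i`. -/
theorem prefix_family_subset_and_ncard {Γ : Type*} [DecidableEq Γ] [Fintype Γ]
    (S : List Γ) (k : ℕ) :
    {T : List Γ | ∃ P : List Γ, P.length ≤ k ∧ T = P ++ S} ⊆
        {S' : List Γ | dlev S S' ≤ k} ∧
      Set.ncard {T : List Γ | ∃ P : List Γ, P.length ≤ k ∧ T = P ++ S} =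
        ∑ i ∈ Finset.range (k + 1), (Fintype.card Γ) ^ i := by
  constructor
  · rintro T ⟨P, hP, rfl⟩
    exact le_trans (dlev_append_le S P) hP
  · have hset : {T : List Γ | ∃ P : List Γ, P.length ≤ k ∧ T = P ++ S} =
        ↑(((Finset.range (k + 1)).biUnion (fun i => listsOfLen Γ i)).image (· ++ S)) := by
      ext T
      simp only [Set.mem_setOf_eq, Finset.coe_image, Set.mem_image, Finset.mem_coe,
        Finset.mem_biUnion, Finset.mem_range, mem_listsOfLen]
      constructor
      · rintro ⟨P, hP, rfl⟩; exact ⟨P, ⟨P.length, by omega, rfl⟩, rfl⟩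
      · rintro ⟨P, ⟨i, hi, hlen⟩, rfl⟩; exact ⟨P, by omega, rfl⟩
    rw [hset, Set.ncard_coe_finset]
    rw [Finset.card_image_of_injective _ (fun a b h => List.append_cancel_right h)]
    rw [Finset.card_biUnion]
    · exact Finset.sum_congr rfl fun i _ => card_listsOfLen i
    · intro a _ b _ hab
      simp only [Finset.disjoint_left, mem_listsOfLen]
      intro l h1 h2; exact hab (h1 ▸ h2 ▸ rfl)
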